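/- Let α be a smooth 1-form on ℝ^N and Γ : [a,b] × (−ε, ε) → ℝ^N a smooth variation; write γ_s(t) = Γ(t,s), γ = γ₀, and δγ(t) = ∂Γ/∂s(t,0). Then d/ds |_{s=0} ∫_a^b α(γ_s(t))(γ̇_s(t)) dt = ∫_a^b dα(γ(t))(δγ(t), γ̇(t)) dt + α(γ(b))(δγ(b)) − α(γ(a))(δγ(a)). -/

import Mathlib

noncomputable section
open scoped ContDiff
open Metric MeasureTheory intervalIntegral

/-- The Lie derivative of a 1-form `α` on `ℝ^N` along a vector field `ζ`:
`(L_ζ α)(x)(v) = (Dα(x)(ζ(x)))(v) + α(x)(Dζ(x)(v))`. -/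
def lieDerivV {N : ℕ} (ζ : (Fin N → ℝ) → (Fin N → ℝ))
    (α : (Fin N → ℝ) → ((Fin N → ℝ) →L[ℝ] ℝ)) (x : Fin N → ℝ) :
    (Fin N → ℝ) →L[ℝ] ℝ :=
  fderiv ℝ α x (ζ x) + (α x).comp (fderiv ℝ ζ x)

/-- The exterior derivative of a 1-form on `ℝ^N`:
`dα(x)(u,v) = (Dα(x)u)(v) − (Dα(x)v)(u)`. -/
def extDerivV {N : ℕ} (α : (Fin N → ℝ) → ((Fin N → ℝ) →L[ℝ] ℝ)) (x u v : Fin N → ℝ) : ℝ :=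
  fderiv ℝ α x u v - fderiv ℝ α x v u

/-- Slice derivative in the first variable. -/
lemma hasDerivAt_slice_fst {E : Type*} [NormedAddCommGroup E] [NormedSpace ℝ E]
    {φ : ℝ × ℝ → E} (hφ : Differentiable ℝ φ) (t s : ℝ) :
    HasDerivAt (fun u => φ (u, s)) (fderiv ℝ φ (t, s) (1, 0)) t := by
  have h1 : HasDerivAt (fun u : ℝ => (u, s)) ((1 : ℝ), (0 : ℝ)) t :=
    (hasDerivAt_id t).prodMk (hasDerivAt_const t s)
  exact (hφ (t, s)).hasFDerivAt.comp_hasDerivAt t h1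

/-- Slice derivative in the second variable. -/
lemma hasDerivAt_slice_snd {E : Type*} [NormedAddCommGroup E] [NormedSpace ℝ E]
    {φ : ℝ × ℝ → E} (hφ : Differentiable ℝ φ) (t s : ℝ) :
    HasDerivAt (fun v => φ (t, v)) (fderiv ℝ φ (t, s) (0, 1)) s := by
  have h1 : HasDerivAt (fun v : ℝ => (t, v)) ((0 : ℝ), (1 : ℝ)) s :=
    (hasDerivAt_const s t).prodMk (hasDerivAt_id s)
  exact (hφ (t, s)).hasFDerivAt.comp_hasDerivAt s h1

/-- first variation formula: for a smooth 1-form `α` on `ℝ^N` and a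
smooth variation `Γ(t,s)` with `γ = Γ(·,0)` and `δγ(t) = ∂Γ/∂s(t,0)`,
`d/ds|₀ ∫_a^b α(γ_s)(γ̇_s) dt
  = ∫_a^b dα(γ)(δγ, γ̇) dt + α(γ(b))(δγ(b)) − α(γ(a))(δγ(a))`. -/
theorem first_variation_of_action {N : ℕ} (hN : 1 ≤ N)
    (α : (Fin N → ℝ) → ((Fin N → ℝ) →L[ℝ] ℝ)) (hα : ContDiff ℝ ∞ α)
    (Γ : ℝ × ℝ → (Fin N → ℝ)) (hΓ : ContDiff ℝ ∞ Γ)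
    (a b ε : ℝ) (hab : a < b) (hε : 0 < ε) :
    HasDerivAt
      (fun s => ∫ t in a..b, α (Γ (t, s)) (deriv (fun u => Γ (u, s)) t))
      ((∫ t in a..b,
          extDerivV α (Γ (t, 0)) (deriv (fun s => Γ (t, s)) 0) (deriv (fun u => Γ (u, 0)) t))
        + α (Γ (b, 0)) (deriv (fun s => Γ (b, s)) 0)
        - α (Γ (a, 0)) (deriv (fun s => Γ (a, s)) 0))
      0 := by
  have hΓd : Differentiable ℝ Γ := hΓ.differentiable (by simp)
  have hαd : Differentiable ℝ α := hα.differentiable (by simp)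
  have hfd : ContDiff ℝ ∞ (fderiv ℝ Γ) := hΓ.fderiv_right le_rfl
  set Dt : ℝ × ℝ → (Fin N → ℝ) := fun p => fderiv ℝ Γ p (1, 0) with hDt_def
  set Ds : ℝ × ℝ → (Fin N → ℝ) := fun p => fderiv ℝ Γ p (0, 1) with hDs_def
  have hDtc : ContDiff ℝ ∞ Dt := hfd.clm_apply contDiff_const
  have hDsc : ContDiff ℝ ∞ Ds := hfd.clm_apply contDiff_const
  -- deriv facts
  have hderiv_t : ∀ t s : ℝ, HasDerivAt (fun u => Γ (u, s)) (Dt (t, s)) t :=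
    fun t s => hasDerivAt_slice_fst hΓd t s
  have hderiv_s : ∀ t s : ℝ, HasDerivAt (fun v => Γ (t, v)) (Ds (t, s)) s :=
    fun t s => hasDerivAt_slice_snd hΓd t s
  -- second derivative symmetry
  have hsym : ∀ p : ℝ × ℝ, fderiv ℝ Dt p (0, 1) = fderiv ℝ Ds p (1, 0) := by
    intro p
    have hLt : HasFDerivAt Dt
        ((ContinuousLinearMap.apply ℝ (Fin N → ℝ) ((1:ℝ), (0:ℝ))).comp
          (fderiv ℝ (fderiv ℝ Γ) p)) p :=
      (ContinuousLinearMap.apply ℝ (Fin N → ℝ) ((1:ℝ), (0:ℝ))).hasFDerivAt.comp p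
        (hfd.differentiable (by simp) p).hasFDerivAt
    have hLs : HasFDerivAt Ds
        ((ContinuousLinearMap.apply ℝ (Fin N → ℝ) ((0:ℝ), (1:ℝ))).comp
          (fderiv ℝ (fderiv ℝ Γ) p)) p :=
      (ContinuousLinearMap.apply ℝ (Fin N → ℝ) ((0:ℝ), (1:ℝ))).hasFDerivAt.comp p
        (hfd.differentiable (by simp) p).hasFDerivAt
    rw [hLt.fderiv, hLs.fderiv]
    exact (hΓ.contDiffAt.isSymmSndFDerivAt (n := ∞) (by rw [minSmoothness_of_isRCLikeNormedField]; exact WithTop.coe_le_coe.mpr (le_top : (2:ℕ∞) ≤ ⊤))) _ _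
  -- the integrand and related functions
  set G : ℝ × ℝ → ℝ := fun p => α (Γ p) (Dt p) with hG_def
  set G' : ℝ × ℝ → ℝ := fun p =>
    fderiv ℝ α (Γ p) (Ds p) (Dt p) + α (Γ p) (fderiv ℝ Dt p (0, 1)) with hG'_def
  set E : ℝ → ℝ := fun t =>
    extDerivV α (Γ (t, 0)) (Ds (t, 0)) (Dt (t, 0)) with hE_def
  set K : ℝ → ℝ := fun t =>
    fderiv ℝ α (Γ (t, 0)) (Dt (t, 0)) (Ds (t, 0))
      + α (Γ (t, 0)) (fderiv ℝ Ds (t, 0) (1, 0)) with hK_def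
  -- s-derivative of G in the second slot
  have hGs : ∀ t s : ℝ, HasDerivAt (fun v => G (t, v)) (G' (t, s)) s := by
    intro t s
    have hc : HasDerivAt (fun v => α (Γ (t, v))) (fderiv ℝ α (Γ (t, s)) (Ds (t, s))) s :=
      (hαd (Γ (t, s))).hasFDerivAt.comp_hasDerivAt s (hderiv_s t s)
    have hu : HasDerivAt (fun v => Dt (t, v)) (fderiv ℝ Dt (t, s) (0, 1)) s :=
      hasDerivAt_slice_snd (hDtc.differentiable (by simp)) t s
    exact hc.clm_apply hu
  -- t-derivative of t ↦ α(Γ(t,0))(Ds(t,0))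
  have hHt : ∀ t : ℝ, HasDerivAt (fun u => α (Γ (u, 0)) (Ds (u, 0))) (K t) t := by
    intro t
    have hc : HasDerivAt (fun u => α (Γ (u, 0))) (fderiv ℝ α (Γ (t, 0)) (Dt (t, 0))) t :=
      (hαd (Γ (t, 0))).hasFDerivAt.comp_hasDerivAt t (hderiv_t t 0)
    have hu : HasDerivAt (fun u => Ds (u, 0)) (fderiv ℝ Ds (t, 0) (1, 0)) t :=
      hasDerivAt_slice_fst (hDsc.differentiable (by simp)) t 0
    exact hc.clm_apply hu
  -- key identity : G'(t,0) = E t + K t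
  have hkey : ∀ t : ℝ, G' (t, 0) = E t + K t := by
    intro t
    simp only [hG'_def, hE_def, hK_def, extDerivV, hsym (t, 0)]
    ring
  -- continuity facts
  have hGc : Continuous G := ((hα.comp hΓ).clm_apply hDtc).continuous
  have hG'c : Continuous G' := by
    have h1 : ContDiff ℝ ∞ (fun p : ℝ × ℝ => fderiv ℝ α (Γ p)) :=
      (hα.fderiv_right le_rfl).comp hΓ
    have h2 : ContDiff ℝ ∞ (fun p : ℝ × ℝ => fderiv ℝ Dt p) := hDtc.fderiv_right le_rfl
    exact (((h1.clm_apply hDsc).clm_apply hDtc).add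
      ((hα.comp hΓ).clm_apply (h2.clm_apply contDiff_const))).continuous
  have hKc : Continuous K := by
    have h1 : ContDiff ℝ ∞ (fun p : ℝ × ℝ => fderiv ℝ α (Γ p)) :=
      (hα.fderiv_right le_rfl).comp hΓ
    have h2 : ContDiff ℝ ∞ (fun p : ℝ × ℝ => fderiv ℝ Ds p) := hDsc.fderiv_right le_rfl
    have : Continuous (fun p : ℝ × ℝ =>
        fderiv ℝ α (Γ p) (Dt p) (Ds p) + α (Γ p) (fderiv ℝ Ds p (1, 0))) :=
      (((h1.clm_apply hDtc).clm_apply hDsc).add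
        ((hα.comp hΓ).clm_apply (h2.clm_apply contDiff_const))).continuous
    exact this.comp (continuous_id.prodMk continuous_const)
  have hEc : Continuous E := by
    have : E = fun t => G' (t, 0) - K t := by
      funext t; have := hkey t; linarith
    rw [this]
    exact (hG'c.comp (continuous_id.prodMk continuous_const)).sub hKc
  -- differentiation under the integral sign
  obtain ⟨C, hC⟩ : ∃ C, ∀ p ∈ (Set.uIcc a b ×ˢ Set.Icc (-1 : ℝ) 1), ‖G' p‖ ≤ C :=
    (isCompact_uIcc.prod isCompact_Icc).exists_bound_of_continuousOn hG'c.continuousOn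
  have hmain : HasDerivAt (fun s => ∫ t in a..b, G (t, s)) (∫ t in a..b, G' (t, 0)) 0 := by
    have := (intervalIntegral.hasDerivAt_integral_of_dominated_loc_of_deriv_le
      (F := fun s t => G (t, s)) (F' := fun s t => G' (t, s)) (x₀ := (0:ℝ))
      (a := a) (b := b) (μ := volume) (bound := fun _ => C) (Metric.ball_mem_nhds 0 one_pos)
      ?_ ?_ ?_ ?_ ?_ ?_).2
    · exact this
    · filter_upwards with s
      exact (hGc.comp (continuous_id.prodMk continuous_const)).aestronglyMeasurable
    · exact (hGc.comp (continuous_id.prodMk continuous_const)).intervalIntegrable a b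
    · exact (hG'c.comp (continuous_id.prodMk continuous_const)).aestronglyMeasurable
    · filter_upwards with t ht s hs
      exact hC (t, s) ⟨Set.uIoc_subset_uIcc ht,
        Set.mem_Icc.2 ⟨by have := abs_lt.1 (by simpa [Real.dist_eq] using hs); linarith,
          by have := abs_lt.1 (by simpa [Real.dist_eq] using hs); linarith⟩⟩
    · exact intervalIntegrable_const
    · filter_upwards with t ht s hs
      exact hGs t s
  -- rewrite integral of G'
  have hsplit : (∫ t in a..b, G' (t, 0)) =
      (∫ t in a..b, E t) + (∫ t in a..b, K t) := by
    rw [← intervalIntegral.integral_add (hEc.intervalIntegrable a b)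
      (hKc.intervalIntegrable a b)]
    exact intervalIntegral.integral_congr fun t _ => hkey t
  have hFTC : (∫ t in a..b, K t) =
      α (Γ (b, 0)) (Ds (b, 0)) - α (Γ (a, 0)) (Ds (a, 0)) := by
    exact intervalIntegral.integral_eq_sub_of_hasDerivAt
      (fun t _ => hHt t) (hKc.intervalIntegrable a b)
  -- assemble
  have hgoal_fun : (fun s => ∫ t in a..b, α (Γ (t, s)) (deriv (fun u => Γ (u, s)) t))
      = fun s => ∫ t in a..b, G (t, s) := by
    funext s
    refine intervalIntegral.integral_congr fun t _ => ?_
    rw [(hderiv_t t s).deriv]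
  have hgoal_val : (∫ t in a..b,
          extDerivV α (Γ (t, 0)) (deriv (fun s => Γ (t, s)) 0) (deriv (fun u => Γ (u, 0)) t))
        + α (Γ (b, 0)) (deriv (fun s => Γ (b, s)) 0)
        - α (Γ (a, 0)) (deriv (fun s => Γ (a, s)) 0)
      = ∫ t in a..b, G' (t, 0) := by
    rw [hsplit, hFTC, (hderiv_s b 0).deriv, (hderiv_s a 0).deriv]
    have : (∫ t in a..b,
        extDerivV α (Γ (t, 0)) (deriv (fun s => Γ (t, s)) 0) (deriv (fun u => Γ (u, 0)) t))
        = ∫ t in a..b, E t := by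
      refine intervalIntegral.integral_congr fun t _ => ?_
      rw [(hderiv_s t 0).deriv, (hderiv_t t 0).deriv]
    rw [this]; ring
  rw [hgoal_fun, hgoal_val]
  exact hmain
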